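/- arXiv:2204.04706 — 7 statements merged into one kernel-verified Lean document; each statement's English description precedes it below -/
import Mathlib

section
/- Let (a_n) and (b_n) be pm sequences, let α, β ≥ 0 be real numbers, and let χ be a probability Borel measure on [0,1]. Define h_{i,n}(χ) = C(n,i) · ∫₀¹ θ^i (1−θ)^{n−i} dχ(θ) for 0 ≤ i ≤ n, where C(n,i) is the binomial coefficient. Then the sequence whose n-th term is ∑_{i=0}^{n} h_{i,n}(χ) · α^i · a_i · β^{n−i} · b_{n−i} is a pm sequence. -/
open MeasureTheory

/-- A sequence of reals is a p(ositive) m(oment) sequence if it is the moment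
sequence of some finite positive Borel measure on `ℝ`. -/
def IsPMSeq (a : ℕ → ℝ) : Prop :=
  ∃ μ : Measure ℝ, IsFiniteMeasure μ ∧
    (∀ n : ℕ, Integrable (fun x => x ^ n) μ) ∧
    ∀ n : ℕ, a n = ∫ x, x ^ n ∂μ

theorem pm_hausdorff_mix (a b : ℕ → ℝ) (ha : IsPMSeq a) (hb : IsPMSeq b)
    (α β : ℝ) (hα : 0 ≤ α) (hβ : 0 ≤ β)
    (χ : Measure ℝ) [IsProbabilityMeasure χ] (hχ : χ (Set.Icc (0 : ℝ) 1)ᶜ = 0) :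
    IsPMSeq (fun n => ∑ i ∈ Finset.range (n + 1),
      ((n.choose i : ℝ) * ∫ θ, θ ^ i * (1 - θ) ^ (n - i) ∂χ) *
        α ^ i * a i * β ^ (n - i) * b (n - i)) := by
  obtain ⟨μ, hμfin, hμint, hμeq⟩ := ha
  obtain ⟨ν, hνfin, hνint, hνeq⟩ := hb
  haveI := hμfin; haveI := hνfin
  set P : Measure (ℝ × ℝ × ℝ) := χ.prod (μ.prod ν) with hP
  set f : ℝ × ℝ × ℝ → ℝ := fun p => p.1 * (α * p.2.1) + (1 - p.1) * (β * p.2.2) with hf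
  have hfm : Measurable f := by fun_prop
  have hae : ∀ᵐ θ ∂χ, θ ∈ Set.Icc (0:ℝ) 1 := by
    rw [ae_iff]
    exact hχ
  have hg : ∀ i j : ℕ, Integrable (fun θ : ℝ => θ ^ i * (1 - θ) ^ j) χ := by
    intro i j
    refine Integrable.mono' (integrable_const 1) (((measurable_id.pow_const i).mul ((measurable_const.sub measurable_id).pow_const j)).aestronglyMeasurable) ?_
    filter_upwards [hae] with θ hθ
    obtain ⟨h0, h1⟩ := hθ
    have habs : |θ ^ i * (1 - θ) ^ j| = θ ^ i * (1 - θ) ^ j :=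
      abs_of_nonneg (mul_nonneg (pow_nonneg h0 _) (pow_nonneg (by linarith) _))
    rw [Real.norm_eq_abs, habs]
    calc θ ^ i * (1 - θ) ^ j ≤ 1 * 1 :=
          mul_le_mul (pow_le_one₀ h0 h1) (pow_le_one₀ (by linarith) (by linarith))
            (pow_nonneg (by linarith) _) one_pos.le
      _ = 1 := mul_one 1
  have hμk : ∀ k : ℕ, Integrable (fun x : ℝ => (α * x) ^ k) μ := by
    intro k; simp_rw [mul_pow]; exact (hμint k).const_mul _
  have hνk : ∀ k : ℕ, Integrable (fun y : ℝ => (β * y) ^ k) ν := by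
    intro k; simp_rw [mul_pow]; exact (hνint k).const_mul _
  have hterm : ∀ n k : ℕ, Integrable (fun p : ℝ × ℝ × ℝ =>
      (p.1 ^ k * (1 - p.1) ^ (n - k)) *
        ((α * p.2.1) ^ k * ((β * p.2.2) ^ (n - k) * (n.choose k : ℝ)))) P := by
    intro n k
    exact (hg k (n - k)).mul_prod ((hμk k).mul_prod ((hνk (n - k)).mul_const _))
  have hexp : ∀ (n : ℕ) (p : ℝ × ℝ × ℝ), f p ^ n =
      ∑ k ∈ Finset.range (n + 1), (p.1 ^ k * (1 - p.1) ^ (n - k)) *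
        ((α * p.2.1) ^ k * ((β * p.2.2) ^ (n - k) * (n.choose k : ℝ))) := by
    intro n p
    rw [hf, add_pow]
    refine Finset.sum_congr rfl fun k _ => ?_
    simp only [mul_pow]
    ring
  refine ⟨Measure.map f P, ?_, ?_, ?_⟩
  · constructor
    rw [Measure.map_apply hfm MeasurableSet.univ]
    exact measure_lt_top P _
  · intro n
    rw [integrable_map_measure (by fun_prop) hfm.aemeasurable]
    rw [show ((fun x : ℝ => x ^ n) ∘ f) = fun p => ∑ k ∈ Finset.range (n + 1),
        (p.1 ^ k * (1 - p.1) ^ (n - k)) *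
          ((α * p.2.1) ^ k * ((β * p.2.2) ^ (n - k) * (n.choose k : ℝ)))
      from funext fun p => hexp n p]
    exact integrable_finset_sum _ fun k _ => hterm n k
  · intro n
    rw [integral_map hfm.aemeasurable (by fun_prop)]
    have : ∫ p, f p ^ n ∂P = ∑ k ∈ Finset.range (n + 1),
        ∫ p, (p.1 ^ k * (1 - p.1) ^ (n - k)) *
          ((α * p.2.1) ^ k * ((β * p.2.2) ^ (n - k) * (n.choose k : ℝ))) ∂P := by
      rw [show (fun p => f p ^ n) = fun p => ∑ k ∈ Finset.range (n + 1),
          (p.1 ^ k * (1 - p.1) ^ (n - k)) *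
            ((α * p.2.1) ^ k * ((β * p.2.2) ^ (n - k) * (n.choose k : ℝ)))
        from funext fun p => hexp n p]
      exact integral_finset_sum _ fun k _ => hterm n k
    rw [this]
    have hPint : ∀ g1 g2 g3 : ℝ → ℝ,
        ∫ p : ℝ × ℝ × ℝ, g1 p.1 * (g2 p.2.1 * g3 p.2.2) ∂P
          = (∫ θ, g1 θ ∂χ) * ((∫ x, g2 x ∂μ) * ∫ y, g3 y ∂ν) := by
      intro g1 g2 g3
      rw [hP, integral_prod_mul g1 (fun q : ℝ × ℝ => g2 q.1 * g3 q.2),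
        integral_prod_mul g2 g3]
    refine Finset.sum_congr rfl fun k hk => ?_
    rw [hPint (fun θ => θ ^ k * (1 - θ) ^ (n - k)) (fun x => (α * x) ^ k)
      (fun y => (β * y) ^ (n - k) * (n.choose k : ℝ))]
    have h1 : ∫ x, (α * x) ^ k ∂μ = α ^ k * a k := by
      simp_rw [mul_pow]
      rw [integral_const_mul, hμeq]
    have h2 : ∫ y, (β * y) ^ (n - k) * (n.choose k : ℝ) ∂ν
        = β ^ (n - k) * b (n - k) * (n.choose k : ℝ) := by
      simp_rw [mul_pow]
      rw [integral_mul_const, integral_const_mul, hνeq]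
    rw [h1, h2]
    ring
end

section
/- If (a_n) and (b_n) are pm sequences, then the pointwise product sequence (a_n · b_n)_{n≥0} is a pm sequence. -/
open MeasureTheory

theorem pm_mul (a b : ℕ → ℝ) (ha : IsPMSeq a) (hb : IsPMSeq b) :
    IsPMSeq (fun n => a n * b n) := by
  obtain ⟨μ, hμfin, hμint, hμeq⟩ := ha
  obtain ⟨ν, hνfin, hνint, hνeq⟩ := hb
  haveI := hμfin; haveI := hνfin
  have hm : Measurable (fun p : ℝ × ℝ => p.1 * p.2) := measurable_mul
  refine ⟨Measure.map (fun p : ℝ × ℝ => p.1 * p.2) (μ.prod ν), ?_, ?_, ?_⟩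
  · exact Measure.isFiniteMeasure_map _ _
  · intro n
    rw [integrable_map_measure (Measurable.aestronglyMeasurable (by fun_prop))
      hm.aemeasurable]
    have : ((fun x : ℝ => x ^ n) ∘ fun p : ℝ × ℝ => p.1 * p.2) =
        fun p : ℝ × ℝ => p.1 ^ n * p.2 ^ n := by
      ext p; simp [mul_pow]
    rw [this]
    exact (hμint n).mul_prod (hνint n)
  · intro n
    rw [integral_map hm.aemeasurable (Measurable.aestronglyMeasurable (by fun_prop))]
    have : (fun p : ℝ × ℝ => (p.1 * p.2) ^ n) = fun p : ℝ × ℝ => p.1 ^ n * p.2 ^ n := by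
      ext p; simp [mul_pow]
    rw [this, integral_prod_mul (f := fun x : ℝ => x ^ n) (g := fun x : ℝ => x ^ n)]
    simp [hμeq n, hνeq n]
end

section
/- If (a_n) is a pm sequence, then the sequence (c_n)_{n≥0} defined by c_n = a_n when n is even and c_n = 0 when n is odd is a pm sequence. -/
open MeasureTheory ENNReal

theorem pm_even_part (a : ℕ → ℝ) (ha : IsPMSeq a) :
    IsPMSeq (fun n => if Even n then a n else 0) := by
  obtain ⟨μ, hfin, hint, hmom⟩ := ha
  have hneg : Measurable (fun x : ℝ => -x) := measurable_neg
  set ν : Measure ℝ := (2 : ℝ≥0∞)⁻¹ • μ + (2 : ℝ≥0∞)⁻¹ • Measure.map (fun x => -x) μ with hν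
  have hmapfin : IsFiniteMeasure (Measure.map (fun x : ℝ => -x) μ) := by
    constructor
    rw [Measure.map_apply hneg MeasurableSet.univ]
    simpa using measure_lt_top μ _
  have hνfin : IsFiniteMeasure ν := by
    constructor
    rw [hν]
    simp only [Measure.add_apply, Measure.smul_apply, smul_eq_mul]
    exact ENNReal.add_lt_top.mpr ⟨ENNReal.mul_lt_top (by simp) (measure_lt_top μ _),
      ENNReal.mul_lt_top (by simp) (measure_lt_top _ _)⟩
  have hintmap : ∀ n : ℕ, Integrable (fun x : ℝ => x ^ n) (Measure.map (fun x => -x) μ) := by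
    intro n
    rw [integrable_map_measure (by fun_prop) hneg.aemeasurable]
    rcases Nat.even_or_odd n with he | ho
    · simpa [Function.comp_def, he.neg_pow] using hint n
    · simp only [Function.comp_def, ho.neg_pow]
      exact (hint n).neg
  have hintν : ∀ n : ℕ, Integrable (fun x : ℝ => x ^ n) ν := by
    intro n
    rw [hν]
    exact ((hint n).smul_measure (by simp)).add_measure ((hintmap n).smul_measure (by simp))
  have hintegralmap : ∀ n : ℕ, ∫ x, x ^ n ∂(Measure.map (fun x : ℝ => -x) μ) = (-1 : ℝ) ^ n * ∫ x, x ^ n ∂μ := by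
    intro n
    rw [integral_map hneg.aemeasurable (by fun_prop)]
    have hx : (∫ x : ℝ, (-x) ^ n ∂μ) = ∫ x : ℝ, (-1 : ℝ) ^ n * x ^ n ∂μ := by
      congr 1
      funext x
      rw [neg_pow]
    rw [hx, integral_const_mul]
  refine ⟨ν, hνfin, hintν, fun n => ?_⟩
  rw [hν]
  rw [integral_add_measure ((hint n).smul_measure (by simp)) ((hintmap n).smul_measure (by simp))]
  rw [integral_smul_measure, integral_smul_measure, hintegralmap n]
  have h2 : ((2 : ℝ≥0∞)⁻¹).toReal = (2 : ℝ)⁻¹ := by simp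
  rcases Nat.even_or_odd n with he | ho
  · simp only [he, if_pos, hmom n, h2, he.neg_one_pow, one_mul, smul_eq_mul]
    ring
  · simp only [Nat.not_even_iff_odd.mpr ho, if_false, ho.neg_one_pow, h2, smul_eq_mul]
    ring
end

section
/- Let (a_n) be the moment sequence of a finite positive Borel measure supported in [0, ∞) (all moments assumed finite). Then the sequence (b'_n)_{n≥0} defined by b'_{2k} = a_k for every k and b'_{2k+1} = 0 for every k is a pm sequence. -/
open MeasureTheory

theorem pm_interleave_zeros (μ : Measure ℝ) [IsFiniteMeasure μ]
    (hsupp : μ (Set.Iio 0) = 0)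
    (hInt : ∀ n : ℕ, Integrable (fun x => x ^ n) μ)
    (a : ℕ → ℝ) (ha : ∀ n : ℕ, a n = ∫ x, x ^ n ∂μ)
    (b' : ℕ → ℝ) (hb'e : ∀ k : ℕ, b' (2 * k) = a k) (hb'o : ∀ k : ℕ, b' (2 * k + 1) = 0) :
    IsPMSeq b' := by
  have hae : ∀ᵐ x ∂μ, 0 ≤ x := by
    rw [ae_iff]
    convert hsupp using 2
    ext x
    simp [not_le]
  have hmS : Measurable fun x : ℝ => Real.sqrt x := Real.continuous_sqrt.measurable
  have hmN : Measurable fun x : ℝ => -Real.sqrt x := hmS.neg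
  have hmP : ∀ n : ℕ, Measurable fun y : ℝ => y ^ n := fun n => (continuous_pow n).measurable
  have hIntS : ∀ n : ℕ, Integrable (fun x => Real.sqrt x ^ n) μ := by
    intro n
    refine ((hInt 0).add (hInt n)).mono (hmS.pow_const n).aestronglyMeasurable ?_
    filter_upwards [hae] with x hx
    simp only [Pi.add_apply]
    rw [Real.norm_eq_abs, Real.norm_eq_abs,
      abs_of_nonneg (pow_nonneg (Real.sqrt_nonneg x) n),
      abs_of_nonneg (by positivity : (0:ℝ) ≤ x ^ 0 + x ^ n)]
    have h2 : (0:ℝ) ≤ x ^ n := pow_nonneg hx n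
    rcases le_total x 1 with h | h
    · have h1 : Real.sqrt x ^ n ≤ 1 := pow_le_one₀ (Real.sqrt_nonneg x) (Real.sqrt_le_one.mpr h)
      calc Real.sqrt x ^ n ≤ 1 := h1
        _ ≤ x ^ 0 + x ^ n := by simp; linarith
    · have hsx : Real.sqrt x ≤ x := by
        nlinarith [Real.sq_sqrt hx, Real.sqrt_nonneg x]
      have h1 : Real.sqrt x ^ n ≤ x ^ n :=
        pow_le_pow_left₀ (Real.sqrt_nonneg x) hsx n
      calc Real.sqrt x ^ n ≤ x ^ n := h1
        _ ≤ x ^ 0 + x ^ n := by simp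
  have hIntN : ∀ n : ℕ, Integrable (fun x => (-Real.sqrt x) ^ n) μ := by
    intro n
    have he : (fun x => (-Real.sqrt x) ^ n) = fun x => (-1 : ℝ) ^ n * Real.sqrt x ^ n := by
      funext x
      rw [neg_pow]
    rw [he]
    exact (hIntS n).const_mul _
  set ν : Measure ℝ :=
    (2 : ENNReal)⁻¹ • μ.map Real.sqrt + (2 : ENNReal)⁻¹ • μ.map (fun x => -Real.sqrt x) with hν
  have hfin : IsFiniteMeasure ν := by
    constructor
    rw [hν]
    simp only [Measure.add_apply, Measure.smul_apply, smul_eq_mul]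
    rw [Measure.map_apply hmS MeasurableSet.univ, Measure.map_apply hmN MeasurableSet.univ]
    exact ENNReal.add_lt_top.2
      ⟨ENNReal.mul_lt_top (by simp) (measure_lt_top μ _),
       ENNReal.mul_lt_top (by simp) (measure_lt_top μ _)⟩
  have hIS : ∀ n : ℕ, Integrable (fun y : ℝ => y ^ n) (μ.map Real.sqrt) := by
    intro n
    rw [integrable_map_measure (hmP n).aestronglyMeasurable hmS.aemeasurable]
    exact hIntS n
  have hIN : ∀ n : ℕ, Integrable (fun y : ℝ => y ^ n) (μ.map (fun x => -Real.sqrt x)) := by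
    intro n
    rw [integrable_map_measure (hmP n).aestronglyMeasurable hmN.aemeasurable]
    exact hIntN n
  have hIν : ∀ n : ℕ, Integrable (fun y : ℝ => y ^ n) ν := by
    intro n
    rw [hν]
    exact Integrable.add_measure ((hIS n).smul_measure (by simp))
      ((hIN n).smul_measure (by simp))
  have hmom : ∀ n : ℕ, ∫ y, y ^ n ∂ν =
      (2 : ℝ)⁻¹ * ∫ x, Real.sqrt x ^ n ∂μ + (2 : ℝ)⁻¹ * ∫ x, (-Real.sqrt x) ^ n ∂μ := by
    intro n
    rw [hν, integral_add_measure ((hIS n).smul_measure (by simp))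
      ((hIN n).smul_measure (by simp)), integral_smul_measure, integral_smul_measure,
      integral_map hmS.aemeasurable (hmP n).aestronglyMeasurable,
      integral_map hmN.aemeasurable (hmP n).aestronglyMeasurable]
    simp [smul_eq_mul, ENNReal.toReal_inv]
  refine ⟨ν, hfin, hIν, ?_⟩
  intro n
  rcases Nat.even_or_odd n with ⟨k, hk⟩ | ⟨k, hk⟩
  · have hk' : n = 2 * k := by omega
    subst hk'
    rw [hb'e k, ha k, hmom]
    have heq : ∀ᵐ x ∂μ, Real.sqrt x ^ (2 * k) = x ^ k := by
      filter_upwards [hae] with x hx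
      rw [pow_mul, Real.sq_sqrt hx]
    have heq' : ∀ᵐ x ∂μ, (-Real.sqrt x) ^ (2 * k) = x ^ k := by
      filter_upwards [hae] with x hx
      rw [Even.neg_pow ⟨k, by ring⟩, pow_mul, Real.sq_sqrt hx]
    rw [integral_congr_ae heq, integral_congr_ae heq']
    ring
  · have hk' : n = 2 * k + 1 := by omega
    subst hk'
    rw [hb'o k, hmom]
    have heq : (∫ x, (-Real.sqrt x) ^ (2 * k + 1) ∂μ) =
        -∫ x, Real.sqrt x ^ (2 * k + 1) ∂μ := by
      rw [← integral_neg]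
      congr 1
      funext x
      exact Odd.neg_pow ⟨k, by ring⟩ _
    rw [heq]
    ring
end

section
/- If (a_n) is a pm sequence, then for every natural number n and every real number x, the even-degree partial exponential sum ∑_{j=0}^{2n} a_j · x^j / j! is nonnegative. -/
open MeasureTheory

/-- Partial sums of the exponential series. -/
noncomputable def expPartial (m : ℕ) (y : ℝ) : ℝ :=
  ∑ j ∈ Finset.range (m + 1), y ^ j / (j.factorial : ℝ)

lemma expPartial_hasDerivAt (m : ℕ) (y : ℝ) :
    HasDerivAt (expPartial (m + 1)) (expPartial m y) y := by
  have h : ∀ z : ℝ, HasDerivAt (expPartial (m + 1))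
      (∑ j ∈ Finset.range (m + 2), (j : ℝ) * z ^ (j - 1) / (j.factorial : ℝ)) z := by
    intro z
    exact HasDerivAt.fun_sum fun j _ => (hasDerivAt_pow j z).div_const _
  have := h y
  convert this using 1
  rw [Finset.sum_range_succ' (fun j => (j : ℝ) * y ^ (j - 1) / (j.factorial : ℝ))]
  simp only [Nat.cast_zero, zero_mul, zero_div, add_zero]
  unfold expPartial
  refine Finset.sum_congr rfl fun i _ => ?_
  have : ((i + 1).factorial : ℝ) = (i + 1) * i.factorial := by
    rw [Nat.factorial_succ]; push_cast; ring
  rw [this]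
  have h1 : ((i : ℝ) + 1) ≠ 0 := by positivity
  field_simp
  simp only [Nat.add_sub_cancel, Nat.add_sub_cancel_left]
  push_cast
  ring

lemma expPartial_le (m : ℕ) :
    ∀ y ≤ (0 : ℝ),
      (if Even m then Real.exp y ≤ expPartial m y else expPartial m y ≤ Real.exp y) := by
  induction m with
  | zero =>
    intro y hy
    simp only [Even.zero, if_pos]
    simpa [expPartial] using Real.exp_le_one_iff.2 hy
  | succ m ih =>
    intro y hy
    have hderiv : ∀ z : ℝ, HasDerivAt (fun t => expPartial (m + 1) t - Real.exp t)
        (expPartial m z - Real.exp z) z := fun z =>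
      (expPartial_hasDerivAt m z).sub (Real.hasDerivAt_exp z)
    have hcont : ContinuousOn (fun t => expPartial (m + 1) t - Real.exp t) (Set.Iic 0) :=
      fun z _ => (hderiv z).continuousAt.continuousWithinAt
    have hval0 : expPartial (m + 1) 0 - Real.exp 0 = 0 := by
      simp [expPartial, Finset.sum_range_succ']
    by_cases hm : Even m
    · -- m even, m+1 odd: show expPartial (m+1) y ≤ exp y
      have hodd : ¬ Even (m + 1) := by simp [Nat.even_add_one, hm]
      rw [if_neg hodd]
      have hmono : MonotoneOn (fun t => expPartial (m + 1) t - Real.exp t) (Set.Iic 0) := by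
        apply monotoneOn_of_hasDerivWithinAt_nonneg (convex_Iic 0) hcont
          (f' := fun z => expPartial m z - Real.exp z)
          (fun z _ => (hderiv z).hasDerivWithinAt)
        intro z hz
        rw [interior_Iic] at hz
        have := ih z hz.le
        rw [if_pos hm] at this
        linarith
      have := hmono (Set.mem_Iic.2 hy) (Set.mem_Iic.2 le_rfl) hy
      simp only at this
      linarith
    · -- m odd, m+1 even: show exp y ≤ expPartial (m+1) y
      have heven : Even (m + 1) := Nat.even_add_one.2 hm
      rw [if_pos heven]
      have hanti : AntitoneOn (fun t => expPartial (m + 1) t - Real.exp t) (Set.Iic 0) := by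
        apply antitoneOn_of_hasDerivWithinAt_nonpos (convex_Iic 0) hcont
          (f' := fun z => expPartial m z - Real.exp z)
          (fun z _ => (hderiv z).hasDerivWithinAt)
        intro z hz
        rw [interior_Iic] at hz
        have := ih z hz.le
        rw [if_neg hm] at this
        linarith
      have := hanti (Set.mem_Iic.2 hy) (Set.mem_Iic.2 le_rfl) hy
      simp only at this
      linarith

lemma expPartial_even_nonneg (n : ℕ) (y : ℝ) :
    0 ≤ ∑ j ∈ Finset.range (2 * n + 1), y ^ j / (j.factorial : ℝ) := by
  rcases le_or_gt 0 y with hy | hy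
  · exact Finset.sum_nonneg fun j _ => by positivity
  · have := expPartial_le (2 * n) y hy.le
    rw [if_pos (even_two_mul n)] at this
    exact le_trans (Real.exp_pos y).le this

theorem pm_partial_exp_nonneg (a : ℕ → ℝ) (ha : IsPMSeq a) :
    ∀ (n : ℕ) (x : ℝ),
      0 ≤ ∑ j ∈ Finset.range (2 * n + 1), a j * x ^ j / (j.factorial : ℝ) := by
  obtain ⟨μ, hfin, hint, hmom⟩ := ha
  intro n x
  have key : ∑ j ∈ Finset.range (2 * n + 1), a j * x ^ j / (j.factorial : ℝ)
      = ∫ t, ∑ j ∈ Finset.range (2 * n + 1), (t * x) ^ j / (j.factorial : ℝ) ∂μ := by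
    rw [integral_finset_sum]
    · refine Finset.sum_congr rfl fun j _ => ?_
      rw [hmom j]
      rw [← integral_mul_const, ← integral_div]
      refine integral_congr_ae (Filter.Eventually.of_forall fun t => ?_)
      simp [mul_pow]
    · intro j _
      have : (fun t : ℝ => (t * x) ^ j / (j.factorial : ℝ))
          = fun t : ℝ => t ^ j * (x ^ j / (j.factorial : ℝ)) := by
        funext t; rw [mul_pow]; ring
      rw [this]
      exact (hint j).mul_const _
  rw [key]
  exact integral_nonneg fun t => expPartial_even_nonneg n (t * x)
end

section
/- If (a_n) and (b_n) are pm sequences, then the sequence of Cesàro averages of their convolution, whose n-th term is (1/(n+1)) · ∑_{i=0}^{n} a_i · b_{n−i}, is a pm sequence. -/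
open MeasureTheory

lemma key_interval (x y : ℝ) (n : ℕ) :
    ∫ t in (0:ℝ)..1, (t*x + (1-t)*y)^n
      = (∑ i ∈ Finset.range (n+1), x^i * y^(n-i)) / (n+1) := by
  have hn : ((n:ℝ)+1) ≠ 0 := by positivity
  rcases eq_or_ne x y with rfl | hxy
  · have h1 : ∀ t : ℝ, (t*x + (1-t)*x)^n = x^n := by intro t; ring_nf
    have h2 : ∑ i ∈ Finset.range (n+1), x^i * x^(n-i) = ((n:ℝ)+1) * x^n := by
      have : ∀ i ∈ Finset.range (n+1), x^i * x^(n-i) = x^n := by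
        intro i hi
        rw [← pow_add]
        congr 1
        have := Finset.mem_range.mp hi
        omega
      rw [Finset.sum_congr rfl this, Finset.sum_const, Finset.card_range]
      ring
    simp only [h1]
    rw [intervalIntegral.integral_const, h2]
    field_simp
    simp
  · have hc : x - y ≠ 0 := sub_ne_zero.mpr hxy
    have heq : ∀ t : ℝ, (t*x + (1-t)*y)^n = ((x-y)*t + y)^n := by intro t; ring_nf
    simp only [heq]
    rw [intervalIntegral.integral_comp_mul_add (fun u => u^n) hc y]
    rw [integral_pow]
    have hg := geom_sum₂_mul x y (n+1)
    simp only [Nat.add_sub_cancel] at hg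
    rw [smul_eq_mul, mul_zero, zero_add, mul_one]
    field_simp
    rw [sub_add_cancel, ← hg]
    ring

theorem pm_cesaro_convolution (a b : ℕ → ℝ) (ha : IsPMSeq a) (hb : IsPMSeq b) :
    IsPMSeq (fun n => (1 / (n + 1 : ℝ)) * ∑ i ∈ Finset.range (n + 1), a i * b (n - i)) := by
  obtain ⟨μ, hμfin, hμint, hμa⟩ := ha
  obtain ⟨ν, hνfin, hνint, hνb⟩ := hb
  haveI := hμfin; haveI := hνfin
  set lam : Measure ℝ := volume.restrict (Set.Icc (0:ℝ) 1) with hlam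
  haveI : IsFiniteMeasure lam := by
    constructor
    rw [Measure.restrict_apply_univ]
    simp [Real.volume_Icc]
  set Q : Measure (ℝ × ℝ) := μ.prod ν with hQ
  set P : Measure ((ℝ × ℝ) × ℝ) := Q.prod lam with hP
  set f : (ℝ × ℝ) × ℝ → ℝ := fun p => p.2 * p.1.1 + (1 - p.2) * p.1.2 with hf
  have hfm : Measurable f := by fun_prop
  -- integrability of |x|^k
  have habsμ : ∀ k, Integrable (fun x : ℝ => |x|^k) μ := by
    intro k
    simpa [abs_pow] using (hμint k).abs
  have habsν : ∀ k, Integrable (fun x : ℝ => |x|^k) ν := by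
    intro k
    simpa [abs_pow] using (hνint k).abs
  have hQint : ∀ k l, Integrable (fun q : ℝ × ℝ => |q.1|^k * |q.2|^l) Q :=
    fun k l => (habsμ k).mul_prod (habsν l)
  have hQint' : ∀ k l, Integrable (fun q : ℝ × ℝ => q.1^k * q.2^l) Q :=
    fun k l => (hμint k).mul_prod (hνint l)
  have hg : ∀ n : ℕ, Integrable (fun q : ℝ × ℝ => (|q.1| + |q.2|)^n) Q := by
    intro n
    have he : (fun q : ℝ × ℝ => (|q.1| + |q.2|)^n)
        = fun q : ℝ × ℝ => ∑ k ∈ Finset.range (n+1), |q.1|^k * |q.2|^(n-k) * (n.choose k : ℝ) := by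
      funext q; rw [add_pow]
    rw [he]
    exact integrable_finset_sum _ fun k _ => (hQint k (n-k)).mul_const _
  have hgP : ∀ n : ℕ, Integrable (fun p : (ℝ × ℝ) × ℝ => (|p.1.1| + |p.1.2|)^n) P := by
    intro n
    have := (hg n).mul_prod (integrable_const (1:ℝ) : Integrable (fun _ : ℝ => (1:ℝ)) lam)
    simpa using this
  -- a.e. membership in Icc
  have haeIcc : ∀ᵐ p ∂P, p.2 ∈ Set.Icc (0:ℝ) 1 :=
    Measure.quasiMeasurePreserving_snd.tendsto_ae.eventually
      (ae_restrict_mem measurableSet_Icc)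
  -- integrability of f^n
  have hfint : ∀ n : ℕ, Integrable (fun p => f p ^ n) P := by
    intro n
    refine (hgP n).mono ((hfm.pow_const n).aestronglyMeasurable) ?_
    filter_upwards [haeIcc] with p hp
    obtain ⟨h0, h1⟩ := hp
    have hb1 : |f p| ≤ |p.1.1| + |p.1.2| := by
      calc |p.2 * p.1.1 + (1 - p.2) * p.1.2|
          ≤ |p.2 * p.1.1| + |(1 - p.2) * p.1.2| := abs_add_le _ _
        _ = |p.2| * |p.1.1| + |1 - p.2| * |p.1.2| := by rw [abs_mul, abs_mul]
        _ ≤ 1 * |p.1.1| + 1 * |p.1.2| := by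
            gcongr
            · exact abs_le.mpr ⟨by linarith, h1⟩
            · exact abs_le.mpr ⟨by linarith, by linarith⟩
        _ = |p.1.1| + |p.1.2| := by ring
    have : ‖f p ^ n‖ = |f p| ^ n := by rw [Real.norm_eq_abs, abs_pow]
    rw [this, Real.norm_eq_abs]
    have hnn : (0:ℝ) ≤ (|p.1.1| + |p.1.2|)^n := by positivity
    rw [abs_of_nonneg hnn]
    exact pow_le_pow_left₀ (abs_nonneg _) hb1 n
  refine ⟨P.map f, inferInstance, ?_, ?_⟩
  · intro n
    exact (integrable_map_measure ((continuous_pow n).aestronglyMeasurable)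
      hfm.aemeasurable).mpr (hfint n)
  · intro n
    have hn : ((n:ℝ)+1) ≠ 0 := by positivity
    show _ = ∫ x, x ^ n ∂(P.map f)
    rw [integral_map hfm.aemeasurable ((continuous_pow n).aestronglyMeasurable)]
    have hfub : ∫ p, f p ^ n ∂P = ∫ q, (∫ t, (t * q.1 + (1-t) * q.2)^n ∂lam) ∂Q := by
      rw [hP]
      exact integral_prod _ (hfint n)
    have hinner : ∀ q : ℝ × ℝ, (∫ t, (t * q.1 + (1-t) * q.2)^n ∂lam)
        = (∑ i ∈ Finset.range (n+1), q.1^i * q.2^(n-i)) / (n+1) := by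
      intro q
      rw [hlam, ← key_interval q.1 q.2 n,
        intervalIntegral.integral_of_le (zero_le_one : (0:ℝ) ≤ 1),
        ← MeasureTheory.integral_Icc_eq_integral_Ioc]
    simp only [hfub, hinner]
    rw [MeasureTheory.integral_div]
    rw [integral_finset_sum _ fun i _ => hQint' i (n-i)]
    have : ∀ i ∈ Finset.range (n+1),
        (∫ q : ℝ × ℝ, q.1^i * q.2^(n-i) ∂Q) = a i * b (n-i) := by
      intro i _
      rw [hQ, integral_prod_mul (fun x : ℝ => x^i) (fun y : ℝ => y^(n-i)), hμa, hνb]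
    rw [Finset.sum_congr rfl this]
    field_simp
end

section
/- Let a and r1 be real numbers with a ≠ 0 and r1 ≠ a, and let (r_n)_{n≥0} be the unique solution of the difference equation r_{n+2} − 2a·r_{n+1} + a²·r_n = 0 with r_0 = 1 and r_1 = r1, namely r_n = a^{n−1}·(n·r1 − a·(n−1)). Then (r_n) is not a pm sequence. -/
open MeasureTheory

theorem double_root_not_pm (a r1 : ℝ) (ha : a ≠ 0) (hr : r1 ≠ a)
    (r : ℕ → ℝ) (h0 : r 0 = 1) (h1 : r 1 = r1)
    (hrec : ∀ n : ℕ, r (n + 2) - 2 * a * r (n + 1) + a ^ 2 * r n = 0)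
    (hformula : ∀ n : ℕ, 1 ≤ n →
      r n = a ^ (n - 1) * ((n : ℝ) * r1 - a * ((n : ℝ) - 1))) :
    ¬ IsPMSeq r := by
  rintro ⟨μ, hfin, hint, hmom⟩
  -- r 2 from the formula
  have hr2 : r 2 = a * (2 * r1 - a) := by
    have h := hformula 2 (by norm_num)
    rw [h]; push_cast; ring
  -- integrability facts
  have hi0 : Integrable (fun _ : ℝ => (1 : ℝ)) μ := by simpa using hint 0
  have hi1 : Integrable (fun x : ℝ => x) μ := by simpa using hint 1
  have hi2 : Integrable (fun x : ℝ => x ^ 2) μ := hint 2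
  -- the integrand (x - r1)^2
  have hiq : Integrable (fun x : ℝ => (x - r1) ^ 2) μ := by
    have : (fun x : ℝ => (x - r1) ^ 2)
        = fun x : ℝ => x ^ 2 - (2 * r1) * x + r1 ^ 2 * 1 := by
      funext x; ring
    rw [this]
    have hA : Integrable (fun x : ℝ => x ^ 2 - 2 * r1 * x) μ :=
      hi2.sub (hi1.const_mul (2 * r1))
    exact hA.add (hi0.const_mul (r1 ^ 2))
  have hnn : 0 ≤ ∫ x, (x - r1) ^ 2 ∂μ :=
    integral_nonneg fun x => sq_nonneg _
  have hexp : ∫ x, (x - r1) ^ 2 ∂μ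
      = (∫ x, x ^ 2 ∂μ) - 2 * r1 * (∫ x, x ∂μ) + r1 ^ 2 * (∫ _, (1:ℝ) ∂μ) := by
    have : (fun x : ℝ => (x - r1) ^ 2)
        = fun x : ℝ => x ^ 2 - (2 * r1) * x + r1 ^ 2 * 1 := by
      funext x; ring
    have hA : Integrable (fun x : ℝ => x ^ 2 - 2 * r1 * x) μ :=
      hi2.sub (hi1.const_mul (2 * r1))
    rw [this, integral_add hA (hi0.const_mul (r1 ^ 2)),
      integral_sub hi2 (hi1.const_mul (2 * r1)), integral_const_mul, integral_const_mul]
  -- identify the moments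
  have m0 : (∫ _, (1:ℝ) ∂μ) = 1 := by
    have h := hmom 0; rw [h0] at h; simpa using h.symm
  have m1 : (∫ x, x ∂μ) = r1 := by
    have h := hmom 1; rw [h1] at h; simpa using h.symm
  have m2 : (∫ x, x ^ 2 ∂μ) = a * (2 * r1 - a) := by
    rw [← hmom 2, hr2]
  rw [hexp, m0, m1, m2] at hnn
  have : (r1 - a) ^ 2 ≤ 0 := by nlinarith
  have := sq_nonneg (r1 - a)
  have hz : (r1 - a) ^ 2 = 0 := le_antisymm ‹(r1 - a)^2 ≤ 0› this
  exact hr (by nlinarith [hz])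
end
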